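/- arXiv:2101.06195 — 3 statements merged into one kernel-verified Lean document; each statement's English description precedes it below -/
import Mathlib

section
/- Let P be a finite nonempty type, n : ℕ, E = EuclideanSpace ℝ (Fin n), and f : P → E → E a family of continuously differentiable vector fields. Then for all states ω ν : E, ν is reachable from ω in the arbitrary-switching reachability relation (the reflexive-transitive closure of the union over p : P of the mode-p flow relations with trivial domains Q p = Set.univ) if and only if there exist a switching signal (τ, σ) for P, a time T ≥ 0, and a solution φ of the switched system from ω following (τ, σ) up to time T, such that φ T = ν. -/
/-- The mode flow relation for vector field `g` with domain `Q`:
`ω` reaches `ν` by following `g` for some time `t ≥ 0` while staying in `Q`. -/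
def FlowRel {n : ℕ} (g : EuclideanSpace ℝ (Fin n) → EuclideanSpace ℝ (Fin n))
    (Q : Set (EuclideanSpace ℝ (Fin n))) (ω ν : EuclideanSpace ℝ (Fin n)) : Prop :=
  ∃ t : ℝ, 0 ≤ t ∧ ∃ φ : ℝ → EuclideanSpace ℝ (Fin n), φ 0 = ω ∧ φ t = ν ∧
    ∀ s ∈ Set.Icc (0 : ℝ) t, HasDerivWithinAt φ (g (φ s)) (Set.Icc (0 : ℝ) t) s ∧ φ s ∈ Q

/-- `(τ, σ)` is a switching signal: switching times are strictly increasing, start at `0`,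
and tend to infinity. -/
def IsSwitchingSignal (P : Type*) (τ : ℕ → ℝ) (σ : ℕ → P) : Prop :=
  StrictMono τ ∧ τ 0 = 0 ∧ Filter.Tendsto τ Filter.atTop Filter.atTop

/-- `φ` is a solution of the switched system `f` from `ω` following `(τ, σ)` up to time `T`. -/
def IsSwitchedSolution {n : ℕ} {P : Type*}
    (f : P → EuclideanSpace ℝ (Fin n) → EuclideanSpace ℝ (Fin n))
    (τ : ℕ → ℝ) (σ : ℕ → P) (ω : EuclideanSpace ℝ (Fin n)) (T : ℝ)
    (φ : ℝ → EuclideanSpace ℝ (Fin n)) : Prop :=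
  Continuous φ ∧ φ 0 = ω ∧
    ∀ i : ℕ, 1 ≤ i → ∀ s ∈ Set.Icc (τ (i - 1)) (τ i) ∩ Set.Icc (0 : ℝ) T,
      HasDerivWithinAt φ (f (σ i) (φ s)) (Set.Icc (τ (i - 1)) (τ i)) s

lemma my_hasDerivWithinAt_singleton {E : Type*} [NormedAddCommGroup E] [NormedSpace ℝ E]
    (f : ℝ → E) (x : ℝ) (c : E) : HasDerivWithinAt f c {x} x := by
  rw [hasDerivWithinAt_iff_hasFDerivWithinAt]
  simp only [HasFDerivWithinAt, nhdsWithin_singleton, hasFDerivAtFilter_iff_isLittleO,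
    Asymptotics.isLittleO_pure, sub_self]
  simp

lemma my_shift {E : Type*} [NormedAddCommGroup E] [NormedSpace ℝ E]
    {φ : ℝ → E} {c : E} {s : Set ℝ} {x a : ℝ}
    (h : HasDerivWithinAt φ c s (x + a)) :
    HasDerivWithinAt (fun y => φ (y + a)) c {y | y + a ∈ s} x := by
  have h2 : HasDerivWithinAt (fun y : ℝ => y + a) 1 {y | y + a ∈ s} x :=
    ((hasDerivAt_id x).add_const a).hasDerivWithinAt
  simpa [Function.comp_def] using h.scomp x h2 (fun y hy => hy)

theorem arbitrary_switching_adequacy {n : ℕ} {P : Type*} [Fintype P] [Nonempty P]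
    (f : P → EuclideanSpace ℝ (Fin n) → EuclideanSpace ℝ (Fin n))
    (hf : ∀ p, ContDiff ℝ 1 (f p)) (ω ν : EuclideanSpace ℝ (Fin n)) :
    Relation.ReflTransGen (fun a b => ∃ p : P, FlowRel (f p) Set.univ a b) ω ν ↔
      ∃ (τ : ℕ → ℝ) (σ : ℕ → P), IsSwitchingSignal P τ σ ∧
        ∃ T : ℝ, 0 ≤ T ∧ ∃ φ : ℝ → EuclideanSpace ℝ (Fin n),
          IsSwitchedSolution f τ σ ω T φ ∧ φ T = ν := by
  constructor
  · intro h
    induction h using Relation.ReflTransGen.head_induction_on with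
    | refl =>
      obtain ⟨p⟩ := ‹Nonempty P›
      refine ⟨fun i => (i : ℝ), fun _ => p,
        ⟨fun a b hab => Nat.cast_lt.mpr hab, by simp, tendsto_natCast_atTop_atTop⟩,
        0, le_rfl, fun s => ν + s • f p ν, ⟨?_, by simp, ?_⟩, by simp⟩
      · fun_prop
      · intro i hi s hs
        have hs0 : s = 0 := le_antisymm hs.2.2 hs.2.1
        subst hs0
        have : HasDerivAt (fun s : ℝ => ν + s • f p ν) (f p ν) 0 := by
          simpa using ((hasDerivAt_id (0:ℝ)).smul_const (f p ν)).const_add ν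
        simpa using this.hasDerivWithinAt
    | head hstep htail ih =>
      obtain ⟨p, t, ht0, φ₀, hφ₀0, hφ₀t, hderiv⟩ := hstep
      obtain ⟨τ, σ, ⟨hmono, hτ0, htend⟩, T, hT0, φ, ⟨hcont, hφ0, hsol⟩, hφT⟩ := ih
      rcases eq_or_lt_of_le ht0 with heq | hpos
      · -- t = 0 : a = b, reuse solution
        have hab : φ₀ 0 = φ₀ t := by rw [← heq]
        exact ⟨τ, σ, ⟨hmono, hτ0, htend⟩, T, hT0, φ,
          ⟨hcont, by rw [hφ0, ← hφ₀t, ← hab, hφ₀0], hsol⟩, hφT⟩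
      · -- t > 0 : prepend flow segment
        have hτnn : ∀ k, 0 ≤ τ k := fun k => hτ0 ▸ hmono.monotone (Nat.zero_le k)
        set a := φ₀ 0 with ha
        set b := φ₀ t with hb
        set τ' : ℕ → ℝ := fun i => if i = 0 then 0 else t + τ (i - 1) with hτ'
        set σ' : ℕ → P := fun i => if i ≤ 1 then p else σ (i - 1) with hσ'
        have hφ₀cont : ContinuousOn φ₀ (Set.Icc 0 t) :=
          fun x hx => ((hderiv x hx).1).continuousWithinAt
        set φ' : ℝ → EuclideanSpace ℝ (Fin n) :=
          fun s => if s ≤ t then φ₀ (max 0 (min s t)) else φ (s - t) with hφ'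
        have hφ'eq₀ : ∀ s ∈ Set.Icc (0:ℝ) t, φ' s = φ₀ s := by
          intro s hs
          simp only [hφ', if_pos hs.2]
          rw [min_eq_left hs.2, max_eq_right hs.1]
        have hφ'eq₁ : ∀ s, t ≤ s → φ' s = φ (s - t) := by
          intro s hst
          by_cases hs : s ≤ t
          · have : s = t := le_antisymm hs hst
            subst this
            simp only [hφ', if_pos le_rfl, min_self, max_eq_right ht0, sub_self, hφ0]
            rw [← hb, ← hφ₀t]
          · simp [hφ', hs]
        refine ⟨τ', σ', ⟨?_, by simp [hτ'], ?_⟩, t + T, by linarith,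
          φ', ⟨?_, ?_, ?_⟩, ?_⟩
        · -- strict mono
          apply strictMono_nat_of_lt_succ
          intro i
          rcases Nat.eq_zero_or_pos i with h0 | hpos'
          · subst h0; simp [hτ', hτ0, hpos]
          · have : i ≠ 0 := hpos'.ne'
            simp only [hτ', if_neg this, if_neg (Nat.succ_ne_zero i), Nat.add_sub_cancel]
            have : i - 1 < i := Nat.sub_lt hpos' one_pos
            linarith [hmono this]
        · -- tendsto
          have h1 : Filter.Tendsto (fun i : ℕ => t + τ (i - 1)) Filter.atTop Filter.atTop := by
            apply Filter.tendsto_atTop_add_const_left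
            exact htend.comp (Filter.tendsto_sub_atTop_nat 1)
          apply h1.congr'
          filter_upwards [Filter.eventually_ge_atTop 1] with i hi
          simp only [hτ']
          rw [if_neg (Nat.one_le_iff_ne_zero.mp hi)]
        · -- continuity
          apply Continuous.if_le _ _ continuous_id continuous_const
          · intro x hx
            simp only [id_eq] at hx
            rw [hx]
            simp only [min_self, max_eq_right ht0, sub_self, hφ0]
            rw [← hφ₀t]
          · apply hφ₀cont.comp_continuous (by fun_prop)
            intro x
            exact ⟨le_max_left _ _, max_le ht0 (min_le_right _ _)⟩
          · exact hcont.comp (by fun_prop)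
        · -- φ' 0 = a
          rw [hφ'eq₀ 0 ⟨le_rfl, ht0⟩]
          exact hφ₀0
        · -- derivative conditions
          intro i hi s hs
          match i, hi with
          | 1, _ =>
            have hsI : s ∈ Set.Icc (0:ℝ) t := by
              simpa [hτ', hτ0] using hs.1
            have := (hderiv s hsI).1
            have h2 : HasDerivWithinAt φ' (f p (φ₀ s)) (Set.Icc (0:ℝ) t) s :=
              this.congr hφ'eq₀ (hφ'eq₀ s hsI)
            have hτ'0 : τ' (1-1) = 0 := by simp [hτ']
            have hτ'1 : τ' 1 = t := by simp [hτ', hτ0]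
            rw [hτ'0, hτ'1]
            have hσ'1 : σ' 1 = p := by simp [hσ']
            rw [hσ'1, hφ'eq₀ s hsI]
            exact h2
          | (j+2), _ =>
            have hτ'a : τ' (j+2-1) = t + τ j := by simp [hτ']
            have hτ'b : τ' (j+2) = t + τ (j+1) := by simp [hτ']
            have hσ'j : σ' (j+2) = σ (j+1) := by simp [hσ']
            rw [hτ'a, hτ'b] at hs ⊢
            rw [hσ'j]
            obtain ⟨⟨hs1, hs2⟩, hs3, hs4⟩ := hs
            have hsub : s - t ∈ Set.Icc (τ (j+1-1)) (τ (j+1)) ∩ Set.Icc (0:ℝ) T := by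
              simp only [Nat.add_sub_cancel]
              constructor
              · constructor <;> [linarith; linarith]
              · constructor
                · have := hτnn j; linarith
                · linarith
            have hd := hsol (j+1) (Nat.le_add_left 1 j) (s - t) hsub
            simp only [Nat.add_sub_cancel] at hd
            have hd2 : HasDerivWithinAt (fun y => φ (y + -t)) (f (σ (j+1)) (φ (s - t)))
                {y | y + -t ∈ Set.Icc (τ j) (τ (j+1))} s := by
              apply my_shift
              rw [show s + -t = s - t by ring]
              exact hd
            have hseteq : Set.Icc (t + τ j) (t + τ (j+1)) ⊆
                {y : ℝ | y + -t ∈ Set.Icc (τ j) (τ (j+1))} := by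
              intro y hy
              simp only [Set.mem_setOf_eq, Set.mem_Icc]
              obtain ⟨hy1, hy2⟩ := hy
              constructor <;> linarith
            have hd3 := hd2.mono hseteq
            have hst : t ≤ s := by have := hτnn j; linarith
            rw [hφ'eq₁ s hst]
            apply hd3.congr
            · intro y hy
              have hyt : t ≤ y := le_trans (by have := hτnn j; linarith) hy.1
              rw [hφ'eq₁ y hyt, show y + -t = y - t by ring]
            · rw [hφ'eq₁ s hst, show s + -t = s - t by ring]
        · -- φ' (t + T) = ν
          rw [hφ'eq₁ (t + T) (by linarith)]
          simpa using hφT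
  · rintro ⟨τ, σ, ⟨hmono, hτ0, htend⟩, T, hT0, φ, ⟨hcont, hφ0, hsol⟩, hφT⟩
    have hτnn : ∀ k, 0 ≤ τ k := fun k => hτ0 ▸ hmono.monotone (Nat.zero_le k)
    have key : ∀ k, Relation.ReflTransGen
        (fun a b => ∃ p : P, FlowRel (f p) Set.univ a b) ω (φ (min (τ k) T)) := by
      intro k
      induction k with
      | zero =>
        rw [hτ0, min_eq_left hT0, hφ0]
      | succ k ih =>
        apply ih.tail
        refine ⟨σ (k+1), ?_⟩
        set a := min (τ k) T with ha
        set b := min (τ (k+1)) T with hb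
        have hab : a ≤ b := min_le_min (hmono.monotone (Nat.le_succ k)) le_rfl
        refine ⟨b - a, by linarith, fun s => φ (s + a), by simp, by
          show φ (b - a + a) = φ b
          rw [sub_add_cancel], ?_⟩
        intro s hs
        refine ⟨?_, trivial⟩
        rcases eq_or_lt_of_le hab with heq | hlt
        · have hs0 : s = 0 := le_antisymm (by rw [← heq] at hs; simpa using hs.2) hs.1
          subst hs0
          have : Set.Icc (0:ℝ) (b - a) = {0} := by
            rw [← heq]; simp
          rw [this]
          exact my_hasDerivWithinAt_singleton _ _ _
        · have hτkT : τ k ≤ T := by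
            by_contra hc
            push_neg at hc
            have : a = T := min_eq_right hc.le
            have : b ≤ a := by rw [this, hb]; exact min_le_right _ _
            linarith
          have haτ : a = τ k := min_eq_left hτkT
          have hsa : s + a ∈ Set.Icc (τ (k+1-1)) (τ (k+1)) ∩ Set.Icc (0:ℝ) T := by
            simp only [Nat.add_sub_cancel]
            obtain ⟨hs1, hs2⟩ := hs
            have hba : s + a ≤ b := by linarith
            refine ⟨⟨by rw [haτ] at *; linarith, le_trans hba (min_le_left _ _)⟩,
              ⟨by have := hτnn k; rw [haτ] at *; linarith, le_trans hba (min_le_right _ _)⟩⟩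
          have hd := hsol (k+1) (Nat.le_add_left 1 k) (s + a) hsa
          simp only [Nat.add_sub_cancel] at hd
          have hd2 := my_shift hd
          apply hd2.mono
          intro y hy
          simp only [Set.mem_setOf_eq, Set.mem_Icc]
          obtain ⟨hy1, hy2⟩ := hy
          refine ⟨by rw [haτ]; linarith, ?_⟩
          have : y + a ≤ b := by linarith
          exact le_trans this (min_le_left _ _)
    obtain ⟨N, hN⟩ := (htend.eventually_ge_atTop T).exists
    have := key N
    rwa [min_eq_right hN, hφT] at this
end

section
/- Define fA (x₁, x₂) = (−x₁/8 − x₂, 2x₁ − x₂/8) on ℝ × ℝ and VA (x₁, x₂) = 2x₁² + x₂². Then every solution of fA satisfies the exponential decay bound VA(φ t) ≤ VA(φ 0)·exp(−t/4): for every t ≥ 0 and every φ : ℝ → ℝ × ℝ that has derivative fA (φ s) within Set.Icc 0 t at each s ∈ Set.Icc 0 t, one has 2·(φ t).1² + (φ t).2² ≤ (2·(φ 0).1² + (φ 0).2²)·Real.exp (−t/4). -/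
/-- The vector field `fA (x₁, x₂) = (−x₁/8 − x₂, 2x₁ − x₂/8)`. -/
noncomputable def fA (x : ℝ × ℝ) : ℝ × ℝ := (-x.1 / 8 - x.2, 2 * x.1 - x.2 / 8)

theorem lyapunov_exponential_decay_fA :
    ∀ t : ℝ, 0 ≤ t → ∀ φ : ℝ → ℝ × ℝ,
      (∀ s ∈ Set.Icc (0 : ℝ) t, HasDerivWithinAt φ (fA (φ s)) (Set.Icc (0 : ℝ) t) s) →
      2 * (φ t).1 ^ 2 + (φ t).2 ^ 2 ≤
        (2 * (φ 0).1 ^ 2 + (φ 0).2 ^ 2) * Real.exp (-t / 4) := by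
  intro t ht φ hφ
  set g : ℝ → ℝ := fun s => (2 * (φ s).1 ^ 2 + (φ s).2 ^ 2) * Real.exp (s / 4) with hg
  have hderiv : ∀ s ∈ Set.Icc (0 : ℝ) t, HasDerivWithinAt g 0 (Set.Icc (0 : ℝ) t) s := by
    intro s hs
    have h1 : HasDerivWithinAt (fun s => (φ s).1) (fA (φ s)).1 (Set.Icc (0 : ℝ) t) s :=
      (hφ s hs).fst
    have h2 : HasDerivWithinAt (fun s => (φ s).2) (fA (φ s)).2 (Set.Icc (0 : ℝ) t) s :=
      (hφ s hs).snd
    have hV : HasDerivWithinAt (fun s => 2 * (φ s).1 ^ 2 + (φ s).2 ^ 2)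
        (2 * (2 * (φ s).1 * (fA (φ s)).1) + 2 * (φ s).2 * (fA (φ s)).2)
        (Set.Icc (0 : ℝ) t) s := by
      refine (((h1.pow 2).const_mul 2).add (h2.pow 2)).congr_deriv ?_
      push_cast
      ring
    have hexp : HasDerivWithinAt (fun s : ℝ => Real.exp (s / 4))
        (Real.exp (s / 4) * (1 / 4)) (Set.Icc (0 : ℝ) t) s := by
      exact (Real.hasDerivAt_exp (s / 4)).comp_hasDerivWithinAt s
        ((hasDerivWithinAt_id s _).div_const 4)
    have := hV.mul hexp
    refine this.congr_deriv ?_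
    simp only [fA]
    ring
  have hcont : ContinuousOn g (Set.Icc (0 : ℝ) t) := fun s hs => (hderiv s hs).continuousWithinAt
  have key : g t = g 0 := by
    refine constant_of_has_deriv_right_zero hcont (fun s hs => ?_) t (Set.right_mem_Icc.2 ht)
    exact (hderiv s (Set.mem_Icc_of_Ico hs)).mono_of_mem_nhdsWithin
      (Icc_mem_nhdsGE_of_mem hs)
  have hexp0 : Real.exp (t / 4) > 0 := Real.exp_pos _
  have hgt : (2 * (φ t).1 ^ 2 + (φ t).2 ^ 2) * Real.exp (t / 4)
      = (2 * (φ 0).1 ^ 2 + (φ 0).2 ^ 2) * Real.exp (0 / 4) := key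
  have : 2 * (φ t).1 ^ 2 + (φ t).2 ^ 2
      = (2 * (φ 0).1 ^ 2 + (φ 0).2 ^ 2) * Real.exp (-t / 4) := by
    have h := hgt
    rw [show (0:ℝ)/4 = 0 by norm_num, Real.exp_zero, mul_one] at h
    have hme : Real.exp (-t / 4) = (Real.exp (t / 4))⁻¹ := by
      rw [← Real.exp_neg]; ring_nf
    rw [hme]
    field_simp
    linarith [h]
  linarith [this]
end

section
/- Define fA (x₁, x₂) = (−x₁/8 − x₂, 2x₁ − x₂/8) and fB (x₁, x₂) = (−x₁/8 − 2x₂, x₁ − x₂/8) on ℝ × ℝ. The origin is stable under slow switching with minimum dwell time 3 between fA and fB: for every ε > 0 there exists δ > 0 such that for every ω with ‖ω‖ < δ, every m ≥ 1, every sequence of modes q 1, …, q m ∈ {A, B}, every sequence of durations s 1, …, s m with s i ≥ 3 for all 1 ≤ i < m and s m ≥ 0, and every continuous φ : ℝ → ℝ × ℝ with φ 0 = ω that on each consecutive interval of length s i solves the ODE given by the vector field of mode q i, one has ‖φ r‖ < ε for all r ∈ Set.Icc 0 (s 1 + ⋯ + s m). -/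
/-- The two switching modes `A` and `B`. -/
inductive Mode : Type
  | A : Mode
  | B : Mode

/-- The vector field `fB (x₁, x₂) = (−x₁/8 − 2x₂, x₁ − x₂/8)`. -/
noncomputable def fB (x : ℝ × ℝ) : ℝ × ℝ := (-x.1 / 8 - 2 * x.2, x.1 - x.2 / 8)

/-- The vector field of each mode. -/
noncomputable def modeField : Mode → ℝ × ℝ → ℝ × ℝ
  | Mode.A => fA
  | Mode.B => fB

/-- The Euclidean norm on `ℝ × ℝ`. -/
noncomputable def enorm2 (x : ℝ × ℝ) : ℝ := Real.sqrt (x.1 ^ 2 + x.2 ^ 2)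

open Set Real

/-- Lyapunov function for each mode. -/
noncomputable def lyap : Mode → ℝ × ℝ → ℝ
  | Mode.A, x => 2 * x.1 ^ 2 + x.2 ^ 2
  | Mode.B, x => x.1 ^ 2 + 2 * x.2 ^ 2

lemma lyap_nonneg (q : Mode) (x : ℝ × ℝ) : 0 ≤ lyap q x := by
  cases q <;> simp only [lyap] <;> positivity

lemma sq_le_lyap (q : Mode) (x : ℝ × ℝ) : x.1 ^ 2 + x.2 ^ 2 ≤ lyap q x := by
  cases q <;> simp only [lyap] <;> nlinarith [sq_nonneg x.1, sq_nonneg x.2]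

lemma lyap_le_two_sq (q : Mode) (x : ℝ × ℝ) : lyap q x ≤ 2 * (x.1 ^ 2 + x.2 ^ 2) := by
  cases q <;> simp only [lyap] <;> nlinarith [sq_nonneg x.1, sq_nonneg x.2]

lemma lyap_le_two_lyap (q q' : Mode) (x : ℝ × ℝ) : lyap q' x ≤ 2 * lyap q x := by
  cases q <;> cases q' <;> simp only [lyap] <;> nlinarith [sq_nonneg x.1, sq_nonneg x.2]

/-- The key constancy lemma: `exp(t/4) * lyap q (φ t)` is constant along a trajectory of
mode `q`. -/
lemma lyap_exp_const (q : Mode) (a b : ℝ) (φ : ℝ → ℝ × ℝ)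
    (hφ : ∀ r ∈ Icc a b, HasDerivWithinAt φ (modeField q (φ r)) (Icc a b) r) :
    ∀ r ∈ Icc a b, Real.exp (r / 4) * lyap q (φ r) = Real.exp (a / 4) * lyap q (φ a) := by
  have hcont : ContinuousOn φ (Icc a b) := fun x hx => (hφ x hx).continuousWithinAt
  apply constant_of_has_deriv_right_zero
  · refine (Real.continuous_exp.comp (continuous_id.div_const 4)).continuousOn.mul ?_
    cases q
    · exact ((hcont.fst.pow 2).const_smul (2 : ℝ)).add (hcont.snd.pow 2)
    · exact (hcont.fst.pow 2).add ((hcont.snd.pow 2).const_smul (2 : ℝ))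
  · intro x hx
    have hd : HasDerivWithinAt φ (modeField q (φ x)) (Ici x) x :=
      (hφ x (Ico_subset_Icc_self hx)).mono_of_mem_nhdsWithin
        (Icc_mem_nhdsGE_of_mem ⟨hx.1, hx.2⟩)
    have h1 : HasDerivWithinAt (fun t => (φ t).1) (modeField q (φ x)).1 (Ici x) x := by
      have := hd.hasFDerivWithinAt.fst
      simpa [HasDerivWithinAt, ContinuousLinearMap.comp] using this.hasDerivWithinAt
    have h2 : HasDerivWithinAt (fun t => (φ t).2) (modeField q (φ x)).2 (Ici x) x := by
      have := hd.hasFDerivWithinAt.snd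
      simpa using this.hasDerivWithinAt
    have hE : HasDerivWithinAt (fun t => Real.exp (t / 4)) (Real.exp (x / 4) * (1 / 4))
        (Ici x) x :=
      by have := ((Real.hasDerivAt_exp (x / 4)).comp x ((hasDerivAt_id x).div_const 4)).hasDerivWithinAt (s := Ici x); exact this
    cases q
    · simp only [lyap]
      have hV : HasDerivWithinAt (fun t => 2 * (φ t).1 ^ 2 + (φ t).2 ^ 2)
          (2 * (2 * (φ x).1 ^ (2 - 1) * (modeField Mode.A (φ x)).1)
            + 2 * (φ x).2 ^ (2 - 1) * (modeField Mode.A (φ x)).2) (Ici x) x :=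
        ((h1.pow 2).const_mul 2).add (h2.pow 2)
      have := hE.mul hV
      convert this using 1
      · rfl
      · rfl
      · simp only [modeField, fA]; ring
    · simp only [lyap]
      have hV : HasDerivWithinAt (fun t => (φ t).1 ^ 2 + 2 * (φ t).2 ^ 2)
          (2 * (φ x).1 ^ (2 - 1) * (modeField Mode.B (φ x)).1
            + 2 * (2 * (φ x).2 ^ (2 - 1) * (modeField Mode.B (φ x)).2)) (Ici x) x :=
        (h1.pow 2).add ((h2.pow 2).const_mul 2)
      have := hE.mul hV
      convert this using 1
      · rfl
      · rfl
      · simp only [modeField, fB]; ring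

lemma lyap_mono (q : Mode) (a b : ℝ) (φ : ℝ → ℝ × ℝ)
    (hφ : ∀ r ∈ Icc a b, HasDerivWithinAt φ (modeField q (φ r)) (Icc a b) r) :
    ∀ r ∈ Icc a b, lyap q (φ r) ≤ lyap q (φ a) := by
  intro r hr
  have h := lyap_exp_const q a b φ hφ r hr
  have hra : a ≤ r := hr.1
  have he : Real.exp (a / 4) ≤ Real.exp (r / 4) := Real.exp_le_exp.2 (by linarith)
  have hpos : (0 : ℝ) < Real.exp (r / 4) := Real.exp_pos _
  nlinarith [lyap_nonneg q (φ a), Real.exp_pos (a / 4)]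

lemma lyap_decay (q : Mode) (a b : ℝ) (hab : 3 ≤ b - a) (φ : ℝ → ℝ × ℝ)
    (hφ : ∀ r ∈ Icc a b, HasDerivWithinAt φ (modeField q (φ r)) (Icc a b) r) :
    lyap q (φ b) ≤ (1 / 2) * lyap q (φ a) := by
  have hb : b ∈ Icc a b := ⟨by linarith, le_refl b⟩
  have h := lyap_exp_const q a b φ hφ b hb
  have h2 : (2 : ℝ) ≤ Real.exp (3 / 4) := by
    have := Real.log_two_lt_d9
    have h3 : Real.log 2 < 3 / 4 := by linarith
    calc (2 : ℝ) = Real.exp (Real.log 2) := (Real.exp_log (by norm_num)).symm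
      _ ≤ Real.exp (3 / 4) := Real.exp_le_exp.2 h3.le
  have hsplit : Real.exp (b / 4) = Real.exp (a / 4) * Real.exp ((b - a) / 4) := by
    rw [← Real.exp_add]; ring_nf
  have hge : Real.exp (3 / 4) ≤ Real.exp ((b - a) / 4) := Real.exp_le_exp.2 (by linarith)
  have hea : (0 : ℝ) < Real.exp (a / 4) := Real.exp_pos _
  have heb : (0 : ℝ) < Real.exp ((b - a) / 4) := Real.exp_pos _
  have hVb : 0 ≤ lyap q (φ b) := lyap_nonneg _ _
  -- from h : exp(a/4) * exp((b-a)/4) * V_b = exp(a/4) * V_a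
  have h' : Real.exp ((b - a) / 4) * lyap q (φ b) = lyap q (φ a) := by
    have h2 := h
    rw [hsplit, mul_assoc] at h2
    exact mul_left_cancel₀ (ne_of_gt hea) h2
  nlinarith

lemma exists_interval (t : ℕ → ℝ) : ∀ m : ℕ, 1 ≤ m → ∀ r : ℝ, t 0 ≤ r → r ≤ t m →
    ∃ i, 1 ≤ i ∧ i ≤ m ∧ t (i - 1) ≤ r ∧ r ≤ t i := by
  intro m
  induction m with
  | zero => omega
  | succ n ih =>
    intro _ r h0 hr
    rcases Nat.eq_zero_or_pos n with hn | hn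
    · subst hn; exact ⟨1, le_refl 1, le_refl 1, h0, hr⟩
    · by_cases hle : r ≤ t n
      · obtain ⟨i, h1, h2, h3, h4⟩ := ih hn r h0 hle
        exact ⟨i, h1, Nat.le_succ_of_le h2, h3, h4⟩
      · exact ⟨n + 1, by omega, le_refl _, by simpa using (not_le.1 hle).le, hr⟩

theorem origin_stable_slow_switching_dwell_three :
    ∀ ε : ℝ, 0 < ε → ∃ δ : ℝ, 0 < δ ∧
      ∀ ω : ℝ × ℝ, enorm2 ω < δ →
        ∀ m : ℕ, 1 ≤ m → ∀ q : ℕ → Mode, ∀ s : ℕ → ℝ,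
          (∀ i : ℕ, 1 ≤ i → i < m → (3 : ℝ) ≤ s i) → 0 ≤ s m →
          ∀ φ : ℝ → ℝ × ℝ, Continuous φ → φ 0 = ω →
            (∀ i : ℕ, 1 ≤ i → i ≤ m →
              ∀ r ∈ Set.Icc (∑ j ∈ Finset.Icc 1 (i - 1), s j) (∑ j ∈ Finset.Icc 1 i, s j),
                HasDerivWithinAt φ (modeField (q i) (φ r))
                  (Set.Icc (∑ j ∈ Finset.Icc 1 (i - 1), s j) (∑ j ∈ Finset.Icc 1 i, s j)) r) →
            ∀ r ∈ Set.Icc (0 : ℝ) (∑ j ∈ Finset.Icc 1 m, s j), enorm2 (φ r) < ε := by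
  intro ε hε
  refine ⟨ε / 2, by linarith, ?_⟩
  intro ω hω m hm q s hdwell hsm φ hφc hφ0 hode r hr
  set t : ℕ → ℝ := fun i => ∑ j ∈ Finset.Icc 1 i, s j with ht
  have ht0 : t 0 = 0 := by simp [ht]
  have htsucc : ∀ i : ℕ, t (i + 1) = t i + s (i + 1) := by
    intro i
    simp only [ht]
    rw [Finset.sum_Icc_succ_top (by omega : 1 ≤ i + 1)]
  -- Main invariant
  have key : ∀ i : ℕ, 1 ≤ i → i ≤ m → lyap (q i) (φ (t (i - 1))) ≤ 2 * (ω.1 ^ 2 + ω.2 ^ 2) := by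
    intro i
    induction i with
    | zero => omega
    | succ n ih =>
      intro _ hnm
      rcases Nat.eq_zero_or_pos n with hn | hn
      · subst hn
        have e : t (0 + 1 - 1) = 0 := ht0
        rw [e, hφ0]
        exact lyap_le_two_sq _ ω
      · have hprev := ih hn (by omega)
        have hdecay : lyap (q n) (φ (t n)) ≤ (1 / 2) * lyap (q n) (φ (t (n - 1))) := by
          have hs : (3 : ℝ) ≤ s n := hdwell n hn (by omega)
          have hdiff : (3 : ℝ) ≤ t n - t (n - 1) := by
            have : t ((n - 1) + 1) = t (n - 1) + s ((n - 1) + 1) := htsucc (n - 1)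
            have hn1 : (n - 1) + 1 = n := by omega
            rw [hn1] at this
            linarith [this.ge, this.le]
          exact lyap_decay (q n) (t (n - 1)) (t n) hdiff φ (hode n hn (by omega))
        have hswitch : lyap (q (n + 1)) (φ (t n)) ≤ 2 * lyap (q n) (φ (t n)) :=
          lyap_le_two_lyap (q n) (q (n + 1)) (φ (t n))
        simp only [Nat.add_sub_cancel]
        linarith
  -- locate r in an interval
  have hmono : t 0 ≤ r := by rw [ht0]; exact hr.1
  obtain ⟨i, hi1, him, hri1, hri2⟩ := exists_interval t m hm r hmono hr.2
  have hrIcc : r ∈ Icc (t (i - 1)) (t i) := ⟨hri1, hri2⟩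
  have hVr : lyap (q i) (φ r) ≤ lyap (q i) (φ (t (i - 1))) :=
    lyap_mono (q i) (t (i - 1)) (t i) φ (hode i hi1 him) r hrIcc
  have hbound : (φ r).1 ^ 2 + (φ r).2 ^ 2 ≤ 2 * (ω.1 ^ 2 + ω.2 ^ 2) :=
    le_trans (sq_le_lyap (q i) (φ r)) (le_trans hVr (key i hi1 him))
  -- conclude
  have hω2 : enorm2 ω ^ 2 = ω.1 ^ 2 + ω.2 ^ 2 := Real.sq_sqrt (by positivity)
  have hr2 : enorm2 (φ r) ^ 2 = (φ r).1 ^ 2 + (φ r).2 ^ 2 := Real.sq_sqrt (by positivity)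
  have hωnn : 0 ≤ enorm2 ω := Real.sqrt_nonneg _
  have hlt : enorm2 (φ r) ^ 2 < ε ^ 2 := by nlinarith
  exact lt_of_pow_lt_pow_left₀ 2 hε.le hlt
end
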